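/- Let (A,G,σ,δ) be a matched pair of groups, X a nonempty set, and for each a ∈ A let φ_a be a permutation of X. Define s' on (X × A × G) × (X × A × G) by s'((α,a,x),(β,b,y)) = ((α, a, xy), (φ⁻¹_{b(δ_x(a))⁻¹}(φ_b(β)), b(δ_x(a))⁻¹, σ_{δ_x(a)}(y))). Then (X × A × G, s') is a bijective set-theoretic solution to the Pentagon Equation. -/

import Mathlib

namespace PE

/-- `s` applied to components 1,2 of a triple. -/
def s12 {S : Type*} (s : S × S → S × S) : S × S × S → S × S × S :=
  fun p => ((s (p.1, p.2.1)).1, (s (p.1, p.2.1)).2, p.2.2)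

/-- `s` applied to components 1,3 of a triple. -/
def s13 {S : Type*} (s : S × S → S × S) : S × S × S → S × S × S :=
  fun p => ((s (p.1, p.2.2)).1, p.2.1, (s (p.1, p.2.2)).2)

/-- `s` applied to components 2,3 of a triple. -/
def s23 {S : Type*} (s : S × S → S × S) : S × S × S → S × S × S :=
  fun p => (p.1, s (p.2.1, p.2.2))

/-- `(S, s)` is a set-theoretic solution to the Pentagon Equation:
`s₂₃ ∘ s₁₃ ∘ s₁₂ = s₁₂ ∘ s₂₃`. -/
def IsPE {S : Type*} (s : S × S → S × S) : Prop :=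
  s23 s ∘ s13 s ∘ s12 s = s12 s ∘ s23 s

/-- The induced binary operation `x · y`: the first component of `s (x, y)`. -/
def mul {S : Type*} (s : S × S → S × S) (x y : S) : S := (s (x, y)).1

/-- The map `θ_x`: `theta s x y = θ_x(y)` is the second component of `s (x, y)`. -/
def theta {S : Type*} (s : S × S → S × S) (x y : S) : S := (s (x, y)).2

/-- The extension solution on `X × A × G` associated to a matched pair of groups
`(A, G, σ, δ)` and a family of permutations `φ_a` of `X`:
`s'((α,a,x),(β,b,y)) = ((α, a, xy), (φ⁻¹_{b(δ_x(a))⁻¹}(φ_b(β)), b(δ_x(a))⁻¹, σ_{δ_x(a)}(y)))`. -/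
def extSol {A G : Type*} [Group A] [Group G] {X : Type*}
    (σ : A → G ≃ G) (δ : G → A ≃ A) (φ : A → X ≃ X) :
    (X × A × G) × (X × A × G) → (X × A × G) × (X × A × G) :=
  fun p =>
    ((p.1.1, p.1.2.1, p.1.2.2 * p.2.2.2),
     ((φ (p.2.2.1 * (δ p.1.2.2 p.1.2.1)⁻¹)).symm (φ p.2.2.1 p.2.1),
      p.2.2.1 * (δ p.1.2.2 p.1.2.1)⁻¹,
      σ (δ p.1.2.2 p.1.2.1) p.2.2.2))

/-- the extension of the solution associated to a matched pair of groups
`(A, G, σ, δ)` by a nonempty set `X` and permutations `φ_a` of `X` is a bijective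
set-theoretic solution to the Pentagon Equation. -/
theorem statement17 {A G : Type*} [Group A] [Group G] {X : Type*} [Nonempty X]
    (σ : A → G ≃ G) (δ : G → A ≃ A)
    (hσ : ∀ (a b : A) (x : G), σ (a * b) x = σ a (σ b x))
    (hδ : ∀ (x y : G) (a : A), δ (x * y) a = δ y (δ x a))
    (hσδ : ∀ (a : A) (x y : G), σ a (x * y) = σ a x * σ (δ x a) y)
    (hδσ : ∀ (x : G) (a b : A), δ x (a * b) = δ (σ b x) a * δ x b)
    (φ : A → X ≃ X) :
    IsPE (extSol σ δ φ) ∧ Function.Bijective (extSol σ δ φ) := by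
  have hσ1 : ∀ x : G, σ 1 x = x := by
    intro x
    have h := hσ 1 1 x
    rw [one_mul] at h
    exact ((σ 1).injective h).symm
  have hδ1 : ∀ a : A, δ 1 a = a := by
    intro a
    have h := hδ 1 1 a
    rw [one_mul] at h
    exact ((δ 1).injective h).symm
  have hσinv : ∀ (a : A) (x : G), σ a⁻¹ (σ a x) = x := by
    intro a x; rw [← hσ, inv_mul_cancel, hσ1]
  have hσinv' : ∀ (a : A) (x : G), σ a (σ a⁻¹ x) = x := by
    intro a x; rw [← hσ, mul_inv_cancel, hσ1]
  have hδinv : ∀ (y : G) (a : A), δ y⁻¹ (δ y a) = a := by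
    intro y a; rw [← hδ, mul_inv_cancel, hδ1]
  have hδinv' : ∀ (y : G) (a : A), δ y (δ y⁻¹ a) = a := by
    intro y a; rw [← hδ, inv_mul_cancel, hδ1]
  have hδone : ∀ y : G, δ y (1 : A) = 1 := by
    intro y
    have h := hδσ y 1 1
    rw [one_mul, hσ1] at h
    exact right_eq_mul.mp h
  have hkey : ∀ (y : G) (b : A), δ (σ b y) b⁻¹ = (δ y b)⁻¹ := by
    intro y b
    have h := hδσ y b⁻¹ b
    rw [inv_mul_cancel, hδone] at h
    exact (eq_inv_of_mul_eq_one_left h.symm)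
  have hkey2 : ∀ (z : G) (d : A), δ (σ d⁻¹ z) d = (δ z d⁻¹)⁻¹ := by
    intro z d
    have h := hkey z d⁻¹
    rw [inv_inv] at h
    exact h
  constructor
  · -- Pentagon equation
    funext p
    obtain ⟨⟨α, a, x⟩, ⟨β, b, y⟩, ⟨γ, c, z⟩⟩ := p
    simp only [Function.comp_apply, s12, s13, s23, extSol, Prod.mk.injEq,
      true_and, and_true]
    have hrel : δ (σ (δ x a) y) (b * (δ x a)⁻¹) * δ y (δ x a) = δ y b := by
      have h := hδσ y (b * (δ x a)⁻¹) (δ x a)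
      rw [inv_mul_cancel_right] at h
      exact h.symm
    have hq : δ (σ (δ x a) y) (b * (δ x a)⁻¹) = δ y b * (δ y (δ x a))⁻¹ :=
      eq_mul_inv_iff_mul_eq.mpr hrel
    have hsub : c * (δ y (δ x a))⁻¹ * (δ y b * (δ y (δ x a))⁻¹)⁻¹ = c * (δ y b)⁻¹ := by
      group
    refine ⟨mul_assoc x y z, ?_, ?_, ?_, ?_⟩
    · rw [hδ x y a, ← hσδ]
    · rw [Equiv.apply_symm_apply, hδ x y a, hq, hsub]
    · rw [hδ x y a, hq, hsub]
    · rw [hδ x y a, hq, ← hσ, inv_mul_cancel_right]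
  · -- Bijectivity
    apply Function.bijective_iff_has_inverse.mpr
    refine ⟨fun P =>
      ((P.1.1, P.1.2.1,
        P.1.2.2 * (σ ((δ P.2.2.2⁻¹ (δ P.1.2.2 P.1.2.1)⁻¹)⁻¹)⁻¹ P.2.2.2)⁻¹),
       ((φ (P.2.2.1 * (δ P.2.2.2⁻¹ (δ P.1.2.2 P.1.2.1)⁻¹)⁻¹)).symm
          (φ P.2.2.1 P.2.1),
        P.2.2.1 * (δ P.2.2.2⁻¹ (δ P.1.2.2 P.1.2.1)⁻¹)⁻¹,
        σ ((δ P.2.2.2⁻¹ (δ P.1.2.2 P.1.2.1)⁻¹)⁻¹)⁻¹ P.2.2.2)), ?_, ?_⟩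
    · -- left inverse
      rintro ⟨⟨α, a, x⟩, ⟨β, b, y⟩⟩
      simp only [extSol]
      have hd : (δ (σ (δ x a) y)⁻¹ (δ (x * y) a)⁻¹)⁻¹ = δ x a := by
        rw [hδ x y a, ← hkey y (δ x a), hδinv, inv_inv]
      rw [hd]
      simp only [inv_inv, hσinv, Prod.mk.injEq, true_and, and_true]
      refine ⟨mul_inv_cancel_right x y, ?_, inv_mul_cancel_right b (δ x a)⟩
      rw [Equiv.apply_symm_apply, inv_mul_cancel_right, Equiv.symm_apply_apply]
    · -- right inverse
      rintro ⟨⟨α, a, u⟩, ⟨γ, c, z⟩⟩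
      simp only [extSol]
      set d : A := (δ z⁻¹ (δ u a)⁻¹)⁻¹ with hdef
      have hdx : δ (u * (σ d⁻¹ z)⁻¹) a = d := by
        apply (δ (σ d⁻¹ z)).injective
        rw [← hδ, inv_mul_cancel_right, hkey2, hdef, inv_inv, hδinv', inv_inv]
      simp only [hdx, inv_inv, hσinv', Prod.mk.injEq, true_and, and_true]
      refine ⟨inv_mul_cancel_right u _, ?_, mul_inv_cancel_right c d⟩
      rw [Equiv.apply_symm_apply, mul_inv_cancel_right, Equiv.symm_apply_apply]

end PE
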